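/- Let d, χ be positive integers, A : Fin d → Matrix (Fin χ) (Fin χ) ℂ a left-canonical MPS tensor with right fixed point ρ, and U ∈ Matrix (Fin d) (Fin d) ℂ unitary. If v, w ∈ Matrix (Fin χ) (Fin χ) ℂ satisfy ‖v‖_ρ = 1 and ‖w‖_ρ = 1, and λ ∈ ℂ satisfies T_U(v) = λ • w, then |λ| ≤ 1. -/

import Mathlib

open Matrix BigOperators
open scoped ComplexOrder

/-- The ρ-weighted norm on χ×χ complex matrices: `‖v‖_ρ = √(Tr(vᴴ * v * ρ))`. -/
noncomputable def rhoNorm {χ : ℕ} (ρ v : Matrix (Fin χ) (Fin χ) ℂ) : ℝ :=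
  Real.sqrt ((vᴴ * v * ρ).trace.re)

/-- The `U`-transfer map `T_U(v) = ∑_{s,t} U s t • ((A s)ᴴ * v * (A t))`. -/
noncomputable def transferMap {d χ : ℕ} (A : Fin d → Matrix (Fin χ) (Fin χ) ℂ)
    (U : Matrix (Fin d) (Fin d) ℂ) (v : Matrix (Fin χ) (Fin χ) ℂ) :
    Matrix (Fin χ) (Fin χ) ℂ :=
  ∑ s, ∑ t, (U s t) • ((A s)ᴴ * v * (A t))

lemma trace_conjTranspose_mul_eq_sum {χ : ℕ} (M N : Matrix (Fin χ) (Fin χ) ℂ) :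
    (Mᴴ * N).trace = ∑ p : Fin χ × Fin χ, (starRingEnd ℂ) (M p.1 p.2) * N p.1 p.2 := by
  rw [Fintype.sum_prod_type]
  simp only [Matrix.trace, Matrix.mul_apply, Matrix.conjTranspose_apply, Matrix.diag]
  rw [Finset.sum_comm]
  rfl

lemma trace_conjTranspose_mul_self' {χ : ℕ} (M : Matrix (Fin χ) (Fin χ) ℂ) :
    (Mᴴ * M).trace = ((∑ p : Fin χ × Fin χ, ‖M p.1 p.2‖ ^ 2 : ℝ) : ℂ) := by
  rw [trace_conjTranspose_mul_eq_sum]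
  push_cast
  refine Finset.sum_congr rfl fun p _ => ?_
  rw [mul_comm, Complex.mul_conj, Complex.normSq_eq_norm_sq]
  push_cast
  ring

set_option maxHeartbeats 1000000 in
theorem transfer_eigenvalue_bound {d χ : ℕ} (hd : 0 < d) (hχ : 0 < χ)
    (A : Fin d → Matrix (Fin χ) (Fin χ) ℂ)
    (hA : ∑ s, (A s)ᴴ * (A s) = 1)
    (ρ : Matrix (Fin χ) (Fin χ) ℂ) (hρ : ρ.PosDef)
    (hfix : ∑ s, A s * ρ * (A s)ᴴ = ρ)
    (U : Matrix (Fin d) (Fin d) ℂ) (hU : U ∈ Matrix.unitaryGroup (Fin d) ℂ)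
    (v w : Matrix (Fin χ) (Fin χ) ℂ)
    (hv : rhoNorm ρ v = 1) (hw : rhoNorm ρ w = 1)
    (lam : ℂ) (hlam : transferMap A U v = lam • w) :
    ‖lam‖ ≤ 1 := by
  classical
  obtain ⟨R, hRps, hRR⟩ : ∃ R : Matrix (Fin χ) (Fin χ) ℂ, R.PosSemidef ∧ R * R = ρ :=
    by open scoped MatrixOrder in
      exact ⟨CFC.sqrt ρ, (CFC.sqrt_nonneg ρ).posSemidef,
        CFC.sqrt_mul_sqrt_self ρ hρ.posSemidef.nonneg⟩
  have hRH : Rᴴ = R := hRps.isHermitian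
  have cyc : ∀ M : Matrix (Fin χ) (Fin χ) ℂ, (R * M * R).trace = (M * ρ).trace := by
    intro M
    rw [Matrix.trace_mul_comm, ← mul_assoc, hRR, Matrix.trace_mul_comm]
  set X : Fin d → Matrix (Fin χ) (Fin χ) ℂ := fun t => v * A t * R with hX
  set Y : Fin d → Matrix (Fin χ) (Fin χ) ℂ := fun s => A s * w * R with hY
  set Z : Fin d → Matrix (Fin χ) (Fin χ) ℂ := fun s => ∑ t, U s t • X t with hZ
  -- ∑ Tr(Yᴴ Y) = Tr(wᴴ w ρ)
  have hYsum : ∑ s, ((Y s)ᴴ * Y s).trace = (wᴴ * w * ρ).trace := by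
    have step : ∀ s, ((Y s)ᴴ * Y s).trace = (wᴴ * ((A s)ᴴ * A s) * w * ρ).trace := by
      intro s
      have h1 : (Y s)ᴴ * Y s = R * (wᴴ * ((A s)ᴴ * A s) * w) * R := by
        simp only [hY, Matrix.conjTranspose_mul, hRH]; noncomm_ring
      rw [h1, cyc]
    rw [Finset.sum_congr rfl fun s _ => step s]
    rw [← Matrix.trace_sum]
    congr 1
    rw [← Finset.sum_mul, ← Finset.sum_mul]
    congr 2
    rw [← Finset.mul_sum, hA, mul_one]
  -- unitarity of U entrywise
  have hUsum : ∀ t t' : Fin d, ∑ s, (starRingEnd ℂ) (U s t) * U s t' =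
      if t = t' then 1 else 0 := by
    intro t t'
    have h : star U * U = 1 := hU.1
    have h2 := congrFun (congrFun h t) t'
    simpa [Matrix.mul_apply, Matrix.conjTranspose_apply, Matrix.one_apply,
      Matrix.star_eq_conjTranspose] using h2
  -- ∑ Tr(Zᴴ Z) = ∑ Tr(Xᴴ X)
  have hZtr : ∑ s, ((Z s)ᴴ * Z s).trace = ∑ t, ((X t)ᴴ * X t).trace := by
    have expand : ∀ s, ((Z s)ᴴ * Z s).trace =
        ∑ t, ∑ t', ((starRingEnd ℂ) (U s t) * U s t') * ((X t)ᴴ * X t').trace := by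
      intro s
      simp only [hZ, Matrix.conjTranspose_sum, Matrix.conjTranspose_smul, Finset.sum_mul,
        Finset.mul_sum, Matrix.smul_mul, Matrix.mul_smul, Matrix.trace_sum, Matrix.trace_smul,
        smul_smul, smul_eq_mul, RCLike.star_def]
      rw [Finset.sum_comm]
      refine Finset.sum_congr rfl fun t _ => Finset.sum_congr rfl fun t' _ => by ring
    rw [Finset.sum_congr rfl fun s _ => expand s]
    rw [Finset.sum_comm]
    calc ∑ t, ∑ s, ∑ t', (starRingEnd ℂ) (U s t) * U s t' * ((X t)ᴴ * X t').trace
        = ∑ t, ∑ t', (∑ s, (starRingEnd ℂ) (U s t) * U s t') * ((X t)ᴴ * X t').trace := by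
          refine Finset.sum_congr rfl fun t _ => ?_
          rw [Finset.sum_comm]
          exact Finset.sum_congr rfl fun t' _ => (Finset.sum_mul _ _ _).symm
      _ = ∑ t, ((X t)ᴴ * X t).trace := by
          refine Finset.sum_congr rfl fun t _ => ?_
          simp only [hUsum, ite_mul, one_mul, zero_mul]
          rw [Finset.sum_ite_eq _ t (fun t' => ((X t)ᴴ * X t').trace)]
          simp
  -- ∑ Tr(Xᴴ X) = Tr(vᴴ v ρ)
  have hXsum : ∑ t, ((X t)ᴴ * X t).trace = (vᴴ * v * ρ).trace := by
    have step : ∀ t, ((X t)ᴴ * X t).trace = (vᴴ * v * (A t * ρ * (A t)ᴴ)).trace := by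
      intro t
      have h1 : (X t)ᴴ * X t = R * ((A t)ᴴ * (vᴴ * v) * A t) * R := by
        simp only [hX, Matrix.conjTranspose_mul, hRH]; noncomm_ring
      rw [h1, cyc]
      have h2 : (A t)ᴴ * (vᴴ * v) * A t * ρ = (A t)ᴴ * (vᴴ * v * (A t * ρ)) := by
        noncomm_ring
      rw [h2, Matrix.trace_mul_comm]
      congr 1
      noncomm_ring
    rw [Finset.sum_congr rfl fun t _ => step t]
    rw [← Matrix.trace_sum, ← Finset.mul_sum, hfix]
  -- trace rewrites as conjTranspose products
  have hwtr : (wᴴ * w * ρ).trace = ((w * R)ᴴ * (w * R)).trace := by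
    have h1 : (w * R)ᴴ * (w * R) = R * (wᴴ * w) * R := by
      simp only [Matrix.conjTranspose_mul, hRH]; noncomm_ring
    rw [h1, cyc]
  have hvtr : (vᴴ * v * ρ).trace = ((v * R)ᴴ * (v * R)).trace := by
    have h1 : (v * R)ᴴ * (v * R) = R * (vᴴ * v) * R := by
      simp only [Matrix.conjTranspose_mul, hRH]; noncomm_ring
    rw [h1, cyc]
  -- the traces equal 1
  have hwreal : (wᴴ * w * ρ).trace = 1 := by
    have h2 : ((wᴴ * w * ρ).trace).re = ∑ p : Fin χ × Fin χ, ‖(w * R) p.1 p.2‖ ^ 2 := by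
      rw [hwtr, trace_conjTranspose_mul_self', Complex.ofReal_re]
    have h3 : ((wᴴ * w * ρ).trace).re = 1 := by
      have hw' := hw
      simp only [rhoNorm] at hw'
      exact Real.sqrt_eq_one.mp hw'
    rw [hwtr, trace_conjTranspose_mul_self', ← h2, h3]
    norm_num
  have hvreal : (vᴴ * v * ρ).trace = 1 := by
    have h2 : ((vᴴ * v * ρ).trace).re = ∑ p : Fin χ × Fin χ, ‖(v * R) p.1 p.2‖ ^ 2 := by
      rw [hvtr, trace_conjTranspose_mul_self', Complex.ofReal_re]
    have h3 : ((vᴴ * v * ρ).trace).re = 1 := by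
      have hv' := hv
      simp only [rhoNorm] at hv'
      exact Real.sqrt_eq_one.mp hv'
    rw [hvtr, trace_conjTranspose_mul_self', ← h2, h3]
    norm_num
  -- lam identity
  have hlamtr : ∑ s, ((Y s)ᴴ * Z s).trace = lam := by
    have per : ∀ s, ((Y s)ᴴ * Z s).trace =
        ∑ t, U s t * (wᴴ * ((A s)ᴴ * v * A t) * ρ).trace := by
      intro s
      simp only [hZ, Finset.mul_sum, Matrix.mul_smul, Matrix.trace_sum, Matrix.trace_smul,
        smul_eq_mul]
      refine Finset.sum_congr rfl fun t _ => ?_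
      congr 1
      have h1 : (Y s)ᴴ * X t = R * (wᴴ * ((A s)ᴴ * v * A t)) * R := by
        simp only [hY, hX, Matrix.conjTranspose_mul, hRH]; noncomm_ring
      rw [h1, cyc]
    rw [Finset.sum_congr rfl fun s _ => per s]
    have key : ∑ s, ∑ t, U s t * (wᴴ * ((A s)ᴴ * v * A t) * ρ).trace
        = (wᴴ * transferMap A U v * ρ).trace := by
      simp only [transferMap, Finset.mul_sum, Finset.sum_mul, Matrix.trace_sum,
        Matrix.mul_smul, Matrix.smul_mul, Matrix.trace_smul, smul_eq_mul]
    rw [key, hlam, Matrix.mul_smul, Matrix.smul_mul, Matrix.trace_smul, smul_eq_mul,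
      hwreal, mul_one]
  -- Euclidean space setup
  set yv : EuclideanSpace ℂ (Fin d × Fin χ × Fin χ) :=
    WithLp.toLp 2 (fun p : Fin d × Fin χ × Fin χ => Y p.1 p.2.1 p.2.2) with hyv
  set zv : EuclideanSpace ℂ (Fin d × Fin χ × Fin χ) :=
    WithLp.toLp 2 (fun p : Fin d × Fin χ × Fin χ => Z p.1 p.2.1 p.2.2) with hzv
  have hinner : (inner ℂ yv zv : ℂ) = lam := by
    rw [← hlamtr]
    have : (inner ℂ yv zv : ℂ) =
        ∑ p : Fin d × Fin χ × Fin χ, (starRingEnd ℂ) (yv p) * zv p := by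
      simp [PiLp.inner_apply, RCLike.inner_apply, mul_comm]
    rw [this, Fintype.sum_prod_type]
    exact Finset.sum_congr rfl fun s _ => (trace_conjTranspose_mul_eq_sum (Y s) (Z s)).symm
  have hynorm : ‖yv‖ = 1 := by
    rw [EuclideanSpace.norm_eq]
    have hc : ((∑ p : Fin d × Fin χ × Fin χ, ‖yv p‖ ^ 2 : ℝ) : ℂ) = 1 := by
      push_cast
      rw [Fintype.sum_prod_type]
      have step : ∀ s : Fin d, (∑ q : Fin χ × Fin χ, ((‖Y s q.1 q.2‖ : ℂ)) ^ 2)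
          = ((Y s)ᴴ * Y s).trace := by
        intro s
        rw [trace_conjTranspose_mul_self']
        push_cast
        rfl
      rw [Finset.sum_congr rfl fun s _ => step s, hYsum, hwreal]
    have hr : ∑ p : Fin d × Fin χ × Fin χ, ‖yv p‖ ^ 2 = 1 := by exact_mod_cast hc
    rw [hr, Real.sqrt_one]
  have hznorm : ‖zv‖ = 1 := by
    rw [EuclideanSpace.norm_eq]
    have hc : ((∑ p : Fin d × Fin χ × Fin χ, ‖zv p‖ ^ 2 : ℝ) : ℂ) = 1 := by
      push_cast
      rw [Fintype.sum_prod_type]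
      have step : ∀ s : Fin d, (∑ q : Fin χ × Fin χ, ((‖Z s q.1 q.2‖ : ℂ)) ^ 2)
          = ((Z s)ᴴ * Z s).trace := by
        intro s
        rw [trace_conjTranspose_mul_self']
        push_cast
        rfl
      rw [Finset.sum_congr rfl fun s _ => step s, hZtr, hXsum, hvreal]
    have hr : ∑ p : Fin d × Fin χ × Fin χ, ‖zv p‖ ^ 2 = 1 := by exact_mod_cast hc
    rw [hr, Real.sqrt_one]
  calc ‖lam‖ = ‖(inner ℂ yv zv : ℂ)‖ := by rw [hinner]
    _ ≤ ‖yv‖ * ‖zv‖ := norm_inner_le_norm (𝕜 := ℂ) yv zv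
    _ = 1 := by rw [hynorm, hznorm, mul_one]
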